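/- For every n ≥ 1, every McNaughton homeomorphism S of [0,1]ⁿ, and every integer d ≥ 1, S permutes the set A_d of rational points of denominator d: S(A_d) = A_d. -/
import Mathlib


open Real MeasureTheory Set

/-- The unit cube `[0,1]ⁿ`. -/
def cube (n : ℕ) : Set (Fin n → ℝ) := Icc 0 1

/-- The piecewise-linear data of a McNaughton homeomorphism: finitely many matrices
`P₁, …, P_k ∈ GL_{n+1}(ℤ)` with last row `(0 … 0 1)` and closed sets `C₁, …, C_k`
covering the cube, such that on `C_j` the map `S` is given in homogeneous coordinates
by `P_j`. -/
def McNData (n : ℕ) (S : (Fin n → ℝ) → (Fin n → ℝ)) : Prop :=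
  ∃ (k : ℕ) (P : Fin k → Matrix (Fin (n + 1)) (Fin (n + 1)) ℤ)
      (C : Fin k → Set (Fin n → ℝ)),
    (∀ j, IsUnit (P j).det) ∧
    (∀ j (i : Fin (n + 1)), P j (Fin.last n) i = if i = Fin.last n then 1 else 0) ∧
    (∀ j, IsClosed (C j)) ∧
    (⋃ j, C j) = cube n ∧
    ∀ j, ∀ p ∈ C j, ∀ i : Fin n,
      S p i = (∑ i' : Fin n, ((P j i.castSucc i'.castSucc : ℤ) : ℝ) * p i') +
        ((P j i.castSucc (Fin.last n) : ℤ) : ℝ)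

/-- `S` is a McNaughton homeomorphism of `[0,1]ⁿ`: a self-homeomorphism of the cube
given piecewise by integer unimodular affine maps. -/
def IsMcNHomeo (n : ℕ) (S : (Fin n → ℝ) → (Fin n → ℝ)) : Prop :=
  ContinuousOn S (cube n) ∧ MapsTo S (cube n) (cube n) ∧
  (∃ T : (Fin n → ℝ) → (Fin n → ℝ), ContinuousOn T (cube n) ∧
    MapsTo T (cube n) (cube n) ∧ InvOn T S (cube n) (cube n)) ∧
  McNData n S

/-- `p ∈ [0,1]ⁿ` is rational of denominator `d`. -/
def hasDenN (n d : ℕ) (p : Fin n → ℝ) : Prop :=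
  (∀ i, ∃ a : ℤ, (d : ℝ) * p i = (a : ℝ)) ∧
  ∀ e : ℕ, 1 ≤ e → (∀ i, ∃ a : ℤ, (e : ℝ) * p i = (a : ℝ)) → d ≤ e

/-- The set `A_d ⊆ [0,1]ⁿ` of rational points of denominator `d`. -/
def AdenN (n d : ℕ) : Set (Fin n → ℝ) := {p | p ∈ cube n ∧ hasDenN n d p}


/-- Integer affine images preserve "e·p is integral". -/
lemma fwd_int {n : ℕ} (B : Fin n → Fin n → ℤ) (c : Fin n → ℤ) (p q : Fin n → ℝ)
    (hpq : ∀ i, q i = (∑ i' : Fin n, ((B i i' : ℤ) : ℝ) * p i') + ((c i : ℤ) : ℝ))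
    (e : ℕ) (h : ∀ i, ∃ a : ℤ, (e : ℝ) * p i = (a : ℝ)) :
    ∀ i, ∃ a : ℤ, (e : ℝ) * q i = (a : ℝ) := by
  choose a ha using h
  intro i
  refine ⟨(∑ i' : Fin n, B i i' * a i') + c i * e, ?_⟩
  rw [hpq i, mul_add, Finset.mul_sum]
  push_cast
  rw [Finset.sum_congr rfl (fun i' _ => ?_), add_right_inj]
  · ring
  · rw [← ha i']; ring

lemma hom_eq {n : ℕ} (P : Matrix (Fin (n + 1)) (Fin (n + 1)) ℤ)
    (hlast : ∀ i : Fin (n + 1), P (Fin.last n) i = if i = Fin.last n then 1 else 0)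
    (p q : Fin n → ℝ)
    (hpq : ∀ i : Fin n, q i = (∑ i' : Fin n, ((P i.castSucc i'.castSucc : ℤ) : ℝ) * p i') +
        ((P i.castSucc (Fin.last n) : ℤ) : ℝ)) :
    (P.map (Int.cast : ℤ → ℝ)).mulVec (Fin.snoc p 1) = Fin.snoc q 1 := by
  funext k
  refine Fin.lastCases ?_ ?_ k
  · simp only [Matrix.mulVec, dotProduct, Matrix.map_apply, Fin.snoc_last]
    simp_rw [hlast]
    rw [Fin.sum_univ_castSucc]
    simp [fun x : Fin n => (Fin.castSucc_lt_last x).ne]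
  · intro i
    simp only [Matrix.mulVec, dotProduct, Matrix.map_apply, Fin.snoc_castSucc]
    rw [Fin.sum_univ_castSucc]
    simp [hpq i]

lemma inv_rel {n : ℕ} (P : Matrix (Fin (n + 1)) (Fin (n + 1)) ℤ) (hdet : IsUnit P.det)
    (hlast : ∀ i : Fin (n + 1), P (Fin.last n) i = if i = Fin.last n then 1 else 0)
    (p q : Fin n → ℝ)
    (hpq : ∀ i : Fin n, q i = (∑ i' : Fin n, ((P i.castSucc i'.castSucc : ℤ) : ℝ) * p i') +
        ((P i.castSucc (Fin.last n) : ℤ) : ℝ)) :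
    ∀ i : Fin n, p i = (∑ i' : Fin n, ((P⁻¹ i.castSucc i'.castSucc : ℤ) : ℝ) * q i') +
        ((P⁻¹ i.castSucc (Fin.last n) : ℤ) : ℝ) := by
  have h1 := hom_eq P hlast p q hpq
  have hmap : ∀ M : Matrix (Fin (n+1)) (Fin (n+1)) ℤ,
      M.map (Int.cast : ℤ → ℝ) = M.map ⇑(Int.castRingHom ℝ) := fun _ => rfl
  have h2 : (P⁻¹.map (Int.cast : ℤ → ℝ)).mulVec (Fin.snoc q 1) = Fin.snoc p 1 := by
    rw [← h1, Matrix.mulVec_mulVec, hmap P⁻¹, hmap P, ← Matrix.map_mul,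
      Matrix.nonsing_inv_mul P hdet, Matrix.map_one _ (by simp) (by simp),
      Matrix.one_mulVec]
  intro i
  have h3 := congrFun h2 i.castSucc
  rw [Fin.snoc_castSucc] at h3
  rw [← h3]
  simp only [Matrix.mulVec, dotProduct, Matrix.map_apply]
  rw [Fin.sum_univ_castSucc]
  simp

/-- Every McNaughton homeomorphism of `[0,1]ⁿ` permutes the set `A_d` of rational
points of denominator `d`, for every `d ≥ 1`. -/
theorem mcnaughton_permutes_denominators (n : ℕ) (hn : 1 ≤ n)
    (S : (Fin n → ℝ) → (Fin n → ℝ)) (hS : IsMcNHomeo n S) (d : ℕ) (hd : 1 ≤ d) :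
    S '' AdenN n d = AdenN n d := by
  obtain ⟨hCont, hMaps, ⟨T, hTc, hTm, hInv⟩, k, P, C, hdet, hlastrow, hclosed, hcover, hform⟩ := hS
  have key : ∀ p ∈ cube n, ∀ e : ℕ,
      ((∀ i, ∃ a : ℤ, (e : ℝ) * p i = (a : ℝ)) ↔ (∀ i, ∃ a : ℤ, (e : ℝ) * S p i = (a : ℝ))) := by
    intro p hp e
    have hpU : p ∈ ⋃ j, C j := by rw [hcover]; exact hp
    obtain ⟨j, hj⟩ := Set.mem_iUnion.mp hpU
    have hrel := fun i => hform j p hj i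
    constructor
    · exact fwd_int (fun i i' => P j i.castSucc i'.castSucc)
        (fun i => P j i.castSucc (Fin.last n)) p (S p) hrel e
    · intro h
      have hrel2 := inv_rel (P j) (hdet j) (hlastrow j) p (S p) hrel
      exact fwd_int (fun i i' => (P j)⁻¹ i.castSucc i'.castSucc)
        (fun i => (P j)⁻¹ i.castSucc (Fin.last n)) (S p) p hrel2 e h
  have keyden : ∀ p ∈ cube n, (hasDenN n d p ↔ hasDenN n d (S p)) := by
    intro p hp
    constructor
    · rintro ⟨h1, h2⟩
      exact ⟨(key p hp d).mp h1, fun e he hi => h2 e he ((key p hp e).mpr hi)⟩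
    · rintro ⟨h1, h2⟩
      exact ⟨(key p hp d).mpr h1, fun e he hi => h2 e he ((key p hp e).mp hi)⟩
  ext q
  simp only [Set.mem_image, AdenN, Set.mem_setOf_eq]
  constructor
  · rintro ⟨p, ⟨hpc, hpd⟩, rfl⟩
    exact ⟨hMaps hpc, (keyden p hpc).mp hpd⟩
  · rintro ⟨hqc, hqd⟩
    have hT : S (T q) = q := hInv.2 hqc
    refine ⟨T q, ⟨hTm hqc, ?_⟩, hT⟩
    rw [← hT] at hqd
    exact (keyden (T q) (hTm hqc)).mpr hqd
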